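/- arXiv:1407.8047 — 3 statements merged into one kernel-verified Lean document; each statement's English description precedes it below -/
import Mathlib

section
/- Let f : [0,∞) → [0,∞) be continuous, strictly positive and nondecreasing on (0,∞), with f(0) = 0 and ∫₀^ε dt/f(t) < +∞ for some ε > 0. Then there exists δ > 0 and a continuously differentiable function τ : [0,δ] → [0,∞) with τ(0) = 0, τ(t) > 0 for t > 0, and τ'(t) = f(τ(t)) for t ∈ (0,δ). -/
open MeasureTheory Set intervalIntegral

theorem stmt10 (f : ℝ → ℝ) (hfc : ContinuousOn f (Set.Ici 0)) (hf0 : f 0 = 0)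
    (hfpos : ∀ t : ℝ, 0 < t → 0 < f t)
    (hmono : MonotoneOn f (Set.Ioi 0))
    (ε : ℝ) (hε : 0 < ε)
    (hint : IntegrableOn (fun t : ℝ => 1 / f t) (Set.Ioo 0 ε)) :
    ∃ δ > (0 : ℝ), ∃ τ : ℝ → ℝ, ContDiffOn ℝ 1 τ (Set.Icc 0 δ) ∧ τ 0 = 0 ∧
      (∀ t : ℝ, 0 < t → t ≤ δ → 0 < τ t) ∧
      (∀ t ∈ Set.Ioo 0 δ, HasDerivAt τ (f (τ t)) t) := by
  set g : ℝ → ℝ := fun t => 1 / f t with hg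
  -- continuity of g on (0,∞)
  have hgc : ContinuousOn g (Ioi (0:ℝ)) := by
    apply ContinuousOn.div continuousOn_const (hfc.mono (Ioi_subset_Ici le_rfl))
    exact fun x hx => (hfpos x hx).ne'
  -- integrability
  have hIcc : IntegrableOn g (Icc 0 ε) := by
    rw [integrableOn_Icc_iff_integrableOn_Ioo]; exact hint
  have hii : ∀ a b : ℝ, a ∈ Icc 0 ε → b ∈ Icc 0 ε → IntervalIntegrable g volume a b := by
    intro a b ha hb
    exact (hIcc.mono_set (uIcc_subset_Icc ha hb)).intervalIntegrable
  set F : ℝ → ℝ := fun x => ∫ t in (0:ℝ)..x, g t with hF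
  have hF0 : F 0 = 0 := intervalIntegral.integral_same
  have hFsub : ∀ a b : ℝ, a ∈ Icc 0 ε → b ∈ Icc 0 ε → F b - F a = ∫ t in a..b, g t := by
    intro a b ha hb
    have h0 : (0:ℝ) ∈ Icc 0 ε := left_mem_Icc.2 hε.le
    exact intervalIntegral.integral_interval_sub_left (hii 0 b h0 hb) (hii 0 a h0 ha)
  have hFmono : StrictMonoOn F (Icc 0 ε) := by
    intro a ha b hb hab
    have hpos : 0 < ∫ t in a..b, g t := by
      apply intervalIntegral.intervalIntegral_pos_of_pos_on (hii a b ha hb) _ hab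
      intro x hx
      exact one_div_pos.mpr (hfpos x (lt_of_le_of_lt ha.1 hx.1))
    have := hFsub a b ha hb
    linarith
  have hFcont : ContinuousOn F (Icc 0 ε) := by
    have := continuousOn_primitive_interval (a := (0:ℝ)) (b := ε) (μ := volume)
      (f := g) (by rwa [uIcc_of_le hε.le])
    rwa [uIcc_of_le hε.le] at this
  set T : ℝ := F ε with hTdef
  have hT : 0 < T := by
    have := hFmono (left_mem_Icc.2 hε.le) (right_mem_Icc.2 hε.le) hε
    rwa [hF0] at this
  -- bijection between [0,ε] and [0,T]
  have hmaps : MapsTo F (Icc 0 ε) (Icc 0 T) := by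
    intro x hx
    constructor
    · rw [← hF0]
      exact hFmono.monotoneOn (left_mem_Icc.2 hε.le) hx hx.1
    · exact hFmono.monotoneOn hx (right_mem_Icc.2 hε.le) hx.2
  have hsurj : SurjOn F (Icc 0 ε) (Icc 0 T) := by
    intro y hy
    apply intermediate_value_Icc hε.le hFcont
    rwa [hF0]
  have hbij : BijOn F (Icc 0 ε) (Icc 0 T) := ⟨hmaps, hFmono.injOn, hsurj⟩
  let e : Icc (0:ℝ) ε ≃ Icc (0:ℝ) T := hbij.equiv F
  have hecont : Continuous e := by
    apply Continuous.subtype_mk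
    exact hFcont.restrict.comp continuous_id
  let homeo : Icc (0:ℝ) ε ≃ₜ Icc (0:ℝ) T := hecont.homeoOfEquivCompactToT2 (f := e)
  set τ : ℝ → ℝ := fun t => ((homeo.symm (projIcc 0 T hT.le t) : Icc (0:ℝ) ε) : ℝ) with hτdef
  have hτcont : Continuous τ := by
    exact continuous_subtype_val.comp (homeo.symm.continuous.comp continuous_projIcc)
  have hτmem : ∀ t, τ t ∈ Icc 0 ε := fun t => (homeo.symm (projIcc 0 T hT.le t)).2
  have hFτ : ∀ t ∈ Icc 0 T, F (τ t) = t := by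
    intro t ht
    have h1 : e (homeo.symm (projIcc 0 T hT.le t)) = projIcc 0 T hT.le t :=
      homeo.apply_symm_apply (projIcc 0 T hT.le t)
    have h2 : (e (homeo.symm (projIcc 0 T hT.le t)) : ℝ) = F (τ t) := rfl
    rw [h1, projIcc_of_mem hT.le ht] at h2
    exact h2.symm
  have hτ0 : τ 0 = 0 := by
    have h1 : F (τ 0) = 0 := hFτ 0 (left_mem_Icc.2 hT.le)
    exact hFmono.injOn (hτmem 0) (left_mem_Icc.2 hε.le) (h1.trans hF0.symm)
  have hτpos : ∀ t : ℝ, 0 < t → t ≤ T → 0 < τ t := by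
    intro t ht htT
    rcases lt_or_eq_of_le (hτmem t).1 with h | h
    · exact h
    · exfalso
      have := hFτ t ⟨ht.le, htT⟩
      rw [← h, hF0] at this
      linarith
  -- choose δ
  set δ : ℝ := F (ε/2) with hδdef
  have hε2 : (ε/2) ∈ Icc 0 ε := ⟨by linarith, by linarith⟩
  have hδpos : 0 < δ := by
    have := hFmono (left_mem_Icc.2 hε.le) hε2 (by linarith)
    rwa [hF0] at this
  have hδT : δ < T := hFmono hε2 (right_mem_Icc.2 hε.le) (by linarith)
  -- derivative at interior points
  have hderiv : ∀ t ∈ Ioo 0 T, HasDerivAt τ (f (τ t)) t := by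
    intro t ht
    set x := τ t with hx
    have hxmem := hτmem t
    have hx0 : 0 < x := hτpos t ht.1 ht.2.le
    have hxε : x < ε := by
      rcases lt_or_eq_of_le hxmem.2 with h | h
      · exact h
      · exfalso
        have := hFτ t ⟨ht.1.le, ht.2.le⟩
        rw [h] at this
        exact absurd this.symm (ne_of_lt ht.2)
    have hxIoi : x ∈ Ioi (0:ℝ) := hx0
    have hFd : HasDerivAt F (g x) x := by
      apply intervalIntegral.integral_hasDerivAt_right
        (hii 0 x (left_mem_Icc.2 hε.le) ⟨hx0.le, hxε.le⟩)
      · exact hgc.stronglyMeasurableAtFilter isOpen_Ioi x hxIoi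
      · exact hgc.continuousAt (isOpen_Ioi.mem_nhds hxIoi)
    have hne : g x ≠ 0 := (one_div_pos.mpr (hfpos x hx0)).ne'
    have hloc : ∀ᶠ y in nhds t, F (τ y) = y := by
      filter_upwards [isOpen_Ioo.mem_nhds ht] with y hy
      exact hFτ y ⟨hy.1.le, hy.2.le⟩
    have := HasDerivAt.of_local_left_inverse hτcont.continuousAt hFd hne hloc
    have hinv : (g x)⁻¹ = f x := by rw [hg]; simp
    rwa [hinv] at this
  -- lower bound for F
  have hlow : ∀ x : ℝ, x ∈ Ioc 0 ε → x / f x ≤ F x := by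
    intro x hx
    have hmeas : MeasurableSet (Ioc (0:ℝ) x) := measurableSet_Ioc
    have hgint : IntegrableOn g (Ioc 0 x) := hIcc.mono_set (Ioc_subset_Icc_self.trans
      (Icc_subset_Icc le_rfl hx.2))
    have hFx : F x = ∫ t in Ioc 0 x, g t := intervalIntegral.integral_of_le hx.1.le
    have hbound : ∀ s ∈ Ioc (0:ℝ) x, (fun _ => 1 / f x) s ≤ g s := by
      intro s hs
      apply one_div_le_one_div_of_le (hfpos s hs.1)
      exact hmono hs.1 (lt_of_lt_of_le hs.1 hs.2) hs.2
    have := setIntegral_mono_on (integrableOn_const (by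
      rw [Real.volume_Ioc]; exact ENNReal.ofReal_ne_top)) hgint hmeas hbound
    rw [setIntegral_const, measureReal_def, Real.volume_Ioc, ENNReal.toReal_ofReal (by linarith [hx.1])] at this
    rw [hFx]
    calc x / f x = (x - 0) • (1 / f x) := by rw [smul_eq_mul]; ring
    _ ≤ _ := this
  -- τ maps [0,δ] into [0, ε/2]
  have hτle : ∀ t ∈ Icc 0 δ, τ t ≤ ε/2 := by
    intro t ht
    by_contra h
    push_neg at h
    have := hFmono hε2 (hτmem t) h
    rw [hFτ t ⟨ht.1, ht.2.trans hδT.le⟩] at this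
    linarith [ht.2]
  -- derivative within at 0
  have hfτcont : ContinuousOn (fun t => f (τ t)) (Icc 0 δ) := by
    apply hfc.comp hτcont.continuousOn
    intro t _
    exact (hτmem t).1
  have hd0 : HasDerivWithinAt τ (f (τ 0)) (Icc 0 δ) 0 := by
    rw [hasDerivWithinAt_iff_tendsto_slope]
    have hfτ0 : f (τ 0) = 0 := by rw [hτ0, hf0]
    rw [hfτ0]
    have hev : ∀ᶠ t in nhdsWithin 0 (Icc 0 δ \ {0}), t ∈ Icc 0 δ \ {0} :=
      eventually_mem_nhdsWithin
    apply tendsto_of_tendsto_of_tendsto_of_le_of_le'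
      (g := fun _ => (0:ℝ)) (h := fun t => f (τ t))
    · exact tendsto_const_nhds
    · have h1 : Filter.Tendsto (fun t => f (τ t)) (nhdsWithin 0 (Icc 0 δ \ {0})) (nhds (f (τ 0))) := by
        apply (hfτcont 0 (left_mem_Icc.2 hδpos.le)).tendsto.mono_left
        exact nhdsWithin_mono 0 diff_subset
      rwa [hfτ0] at h1
    · filter_upwards [hev] with t ht
      have ht0 : 0 < t := lt_of_le_of_ne ht.1.1 (Ne.symm ht.2)
      rw [slope_def_field, hτ0, sub_zero, sub_zero]
      exact div_nonneg (hτmem t).1 ht0.le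
    · filter_upwards [hev] with t ht
      have ht0 : 0 < t := lt_of_le_of_ne ht.1.1 (Ne.symm ht.2)
      have htT : t ≤ T := ht.1.2.trans hδT.le
      have hτt : 0 < τ t := hτpos t ht0 htT
      have hfτpos : 0 < f (τ t) := hfpos _ hτt
      have h1 : τ t / f (τ t) ≤ t := by
        have := hlow (τ t) ⟨hτt, (hτmem t).2⟩
        rwa [hFτ t ⟨ht0.le, htT⟩] at this
      rw [div_le_iff₀ hfτpos] at h1
      rw [slope_def_field, hτ0, sub_zero, sub_zero, div_le_iff₀ ht0]
      linarith [h1, mul_comm t (f (τ t))]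
  -- assemble
  have hdW : ∀ t ∈ Icc (0:ℝ) δ, HasDerivWithinAt τ (f (τ t)) (Icc 0 δ) t := by
    intro t ht
    rcases eq_or_lt_of_le ht.1 with h | h
    · rw [← h]; exact hd0
    · exact (hderiv t ⟨h, ht.2.trans_lt hδT⟩).hasDerivWithinAt
  have hu : UniqueDiffOn ℝ (Icc (0:ℝ) δ) := uniqueDiffOn_Icc hδpos
  refine ⟨δ, hδpos, τ, ?_, hτ0, fun t ht htδ => hτpos t ht (htδ.trans hδT.le),
    fun t ht => hderiv t ⟨ht.1, ht.2.trans hδT⟩⟩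
  rw [show (1 : WithTop ℕ∞) = 0 + 1 by norm_num, contDiffOn_succ_iff_derivWithin hu]
  refine ⟨fun t ht => (hdW t ht).differentiableWithinAt, by intro h; simp at h, ?_⟩
  rw [contDiffOn_zero]
  exact hfτcont.congr (fun t ht => (hdW t ht).derivWithin (hu t ht))
end

section
/- Let w : [0,T] → [0,∞) be continuous and bounded, let G : [0,∞) → [0,∞) be continuous increasing with G(0)=0, and suppose for some constants C > 0 and p > 2 one has w(s) ≤ C ∫₀^s G(w(t)) (1 + (s−t)^{−1/2}) dt for all s ∈ (0,T]. Then w(s)^p ≤ C̃ ∫₀^s G^p(w(t)) dt for some constant C̃ depending only on C, p, T. If moreover ∫_{0+} du/G^p(u^{1/p}) = +∞, then w ≡ 0. -/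
open MeasureTheory Set Filter intervalIntegral Topology

-- Auxiliary: integrability of the singular kernel power
lemma aux_kernel_integrable {q T : ℝ} (hq0 : 0 < q) (hq2 : q < 2) (hT : 0 < T) :
    IntervalIntegrable (fun u : ℝ => (1 + u ^ (-(1:ℝ)/2)) ^ q) volume 0 T := by
  rw [intervalIntegrable_iff_integrableOn_Ioc_of_le hT.le]
  have hbase : IntervalIntegrable (fun u : ℝ => 2 ^ q * (1 + u ^ (-(q/2)))) volume 0 T := by
    apply IntervalIntegrable.const_mul
    exact (_root_.intervalIntegrable_const).add (intervalIntegrable_rpow' (by linarith))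
  have hbase' : IntegrableOn (fun u : ℝ => 2 ^ q * (1 + u ^ (-(q/2)))) (Ioc 0 T) := by
    rwa [intervalIntegrable_iff_integrableOn_Ioc_of_le hT.le] at hbase
  apply Integrable.mono' hbase'
  · apply ContinuousOn.aestronglyMeasurable _ measurableSet_Ioc
    intro u hu
    have h1 : ContinuousAt (fun u : ℝ => u ^ (-(1:ℝ)/2)) u :=
      Real.continuousAt_rpow_const u _ (Or.inl (ne_of_gt hu.1))
    exact ((continuousAt_const.add h1).rpow_const (Or.inr hq0.le)).continuousWithinAt
  · rw [ae_restrict_iff' measurableSet_Ioc]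
    apply Eventually.of_forall
    intro u hu
    have hx : (0:ℝ) ≤ u ^ (-(1:ℝ)/2) := Real.rpow_nonneg hu.1.le _
    have hnn : (0:ℝ) ≤ 1 + u ^ (-(1:ℝ)/2) := by linarith
    rw [Real.norm_of_nonneg (Real.rpow_nonneg hnn _)]
    set x := u ^ (-(1:ℝ)/2) with hxdef
    have h1 : 1 + x ≤ 2 * max 1 x := by
      have := le_max_left (1:ℝ) x
      have := le_max_right (1:ℝ) x
      linarith
    calc (1 + x) ^ q ≤ (2 * max 1 x) ^ q :=
          Real.rpow_le_rpow hnn h1 hq0.le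
      _ = 2 ^ q * (max 1 x) ^ q := Real.mul_rpow (by norm_num) (le_max_of_le_left zero_le_one)
      _ ≤ 2 ^ q * (1 + x ^ q) := by
          apply mul_le_mul_of_nonneg_left _ (Real.rpow_nonneg (by norm_num) _)
          rcases le_total x 1 with h | h
          · rw [max_eq_left h, Real.one_rpow]
            have : 0 ≤ x ^ q := Real.rpow_nonneg hx _
            linarith
          · rw [max_eq_right h]
            have : 0 ≤ (1:ℝ) := zero_le_one
            nlinarith [Real.rpow_nonneg hx q]
      _ = 2 ^ q * (1 + u ^ (-(q/2))) := by
          rw [hxdef, ← Real.rpow_mul hu.1.le]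
          rw [show ((-1:ℝ)/2*q) = -(q/2) by ring]


lemma aux_holder {p q T s : ℝ} (hp : 2 < p) (hq : q = p / (p - 1)) (hT : 0 < T)
    (hs : s ∈ Set.Ioc 0 T) (f : ℝ → ℝ) (hf : Continuous f) (hfnn : ∀ t, 0 ≤ f t) :
    (∫ t in (0:ℝ)..s, f t * (1 + (s - t) ^ (-(1:ℝ)/2))) ≤
      (∫ t in (0:ℝ)..s, f t ^ p) ^ (1/p) *
      (∫ u in (0:ℝ)..T, (1 + u ^ (-(1:ℝ)/2)) ^ q) ^ (1/q) := by
  have hp1 : (1:ℝ) < p := by linarith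
  have hq1 : 1 < q := by rw [hq, lt_div_iff₀ (by linarith)]; linarith
  have hq2 : q < 2 := by rw [hq, div_lt_iff₀ (by linarith)]; linarith
  have hq0 : 0 < q := by linarith
  have hpq : Real.HolderConjugate p q := (Real.holderConjugate_iff_eq_conjExponent hp1).2 hq
  haveI : IsFiniteMeasure (volume.restrict (Set.Ioc (0:ℝ) s)) :=
    ⟨by rw [Measure.restrict_apply_univ]; exact measure_Ioc_lt_top⟩
  set g : ℝ → ℝ := fun t => 1 + (s - t) ^ (-(1:ℝ)/2) with hgdef
  have hg_nonneg : 0 ≤ᵐ[volume.restrict (Set.Ioc (0:ℝ) s)] g := by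
    apply (ae_restrict_iff' measurableSet_Ioc).2
    apply Eventually.of_forall
    intro t ht
    have : (0:ℝ) ≤ (s - t) ^ (-(1:ℝ)/2) := Real.rpow_nonneg (by linarith [ht.2]) _
    simp only [hgdef, Pi.zero_apply]; linarith
  have hg_meas : AEStronglyMeasurable g (volume.restrict (Set.Ioc (0:ℝ) s)) := by
    rw [← Measure.restrict_congr_set Ioo_ae_eq_Ioc]
    apply ContinuousOn.aestronglyMeasurable _ measurableSet_Ioo
    intro t ht
    have h1 : ContinuousAt (fun t : ℝ => s - t) t := by fun_prop
    exact (continuousAt_const.add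
      (h1.rpow_const (Or.inl (ne_of_gt (sub_pos.2 ht.2))))).continuousWithinAt
  have hIq := aux_kernel_integrable hq0 hq2 hT
  have hIqs : IntervalIntegrable (fun u : ℝ => (1 + u ^ (-(1:ℝ)/2)) ^ q) volume 0 s :=
    hIq.mono_set (by
      rw [Set.uIcc_of_le hs.1.le, Set.uIcc_of_le hT.le]
      exact Set.Icc_subset_Icc le_rfl hs.2)
  have hIcomp : IntervalIntegrable (fun t : ℝ => (1 + (s - t) ^ (-(1:ℝ)/2)) ^ q) volume 0 s := by
    have := (hIqs.comp_sub_left s).symm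
    simpa using this
  have hg_pow_int : Integrable (fun t => g t ^ q) (volume.restrict (Set.Ioc (0:ℝ) s)) :=
    (intervalIntegrable_iff_integrableOn_Ioc_of_le hs.1.le).1 hIcomp
  have hgLq : MemLp g (ENNReal.ofReal q) (volume.restrict (Set.Ioc (0:ℝ) s)) := by
    have h1 : (ENNReal.ofReal q) ≠ 0 := by
      simp only [ne_eq, ENNReal.ofReal_eq_zero, not_le]; exact hq0
    have h2 : (ENNReal.ofReal q) ≠ ⊤ := ENNReal.ofReal_ne_top
    apply (memLp_norm_rpow_iff hg_meas h1 h2).1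
    rw [ENNReal.div_self h1 h2, ENNReal.toReal_ofReal hq0.le, memLp_one_iff_integrable]
    apply hg_pow_int.congr
    filter_upwards [hg_nonneg] with t ht
    rw [Real.norm_of_nonneg ht]
  have hfLp : MemLp f (ENNReal.ofReal p) (volume.restrict (Set.Ioc (0:ℝ) s)) := by
    obtain ⟨B, hB⟩ :=
      (isCompact_Icc (a := (0:ℝ)) (b := s)).exists_bound_of_continuousOn hf.continuousOn
    apply MemLp.mono_exponent (q := ⊤) _ le_top
    apply memLp_top_of_bound hf.aestronglyMeasurable.restrict B
    apply (ae_restrict_iff' measurableSet_Ioc).2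
    exact Eventually.of_forall fun t ht => hB t ⟨ht.1.le, ht.2⟩
  have hf_nonneg : 0 ≤ᵐ[volume.restrict (Set.Ioc (0:ℝ) s)] f := Eventually.of_forall hfnn
  have hHold := integral_mul_le_Lp_mul_Lq_of_nonneg hpq hf_nonneg hg_nonneg hfLp hgLq
  have hfp_nonneg : (0:ℝ) ≤ ∫ a in Set.Ioc (0:ℝ) s, f a ^ p :=
    integral_nonneg fun t => Real.rpow_nonneg (hfnn t) _
  have e2 : (∫ t in (0:ℝ)..s, (1 + (s - t) ^ (-(1:ℝ)/2)) ^ q)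
      = ∫ u in (0:ℝ)..s, (1 + u ^ (-(1:ℝ)/2)) ^ q := by
    have := integral_comp_sub_left (a := (0:ℝ)) (b := s)
      (fun u : ℝ => (1 + u ^ (-(1:ℝ)/2)) ^ q) s
    simpa using this
  have e3 : (∫ u in (0:ℝ)..s, (1 + u ^ (-(1:ℝ)/2)) ^ q)
      ≤ ∫ u in (0:ℝ)..T, (1 + u ^ (-(1:ℝ)/2)) ^ q := by
    apply integral_mono_interval le_rfl hs.1.le hs.2 _ hIq
    apply (ae_restrict_iff' measurableSet_Ioc).2
    apply Eventually.of_forall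
    intro u hu
    have : (0:ℝ) ≤ u ^ (-(1:ℝ)/2) := Real.rpow_nonneg hu.1.le _
    exact Real.rpow_nonneg (by linarith) _
  have e4 : (∫ a in Set.Ioc (0:ℝ) s, g a ^ q) ≤ ∫ u in (0:ℝ)..T, (1 + u ^ (-(1:ℝ)/2)) ^ q := by
    have h5 : (∫ a in Set.Ioc (0:ℝ) s, g a ^ q)
        = ∫ t in (0:ℝ)..s, (1 + (s - t) ^ (-(1:ℝ)/2)) ^ q := by
      rw [intervalIntegral.integral_of_le hs.1.le]
    rw [h5, e2]; exact e3
  have hgq_nonneg : (0:ℝ) ≤ ∫ a in Set.Ioc (0:ℝ) s, g a ^ q := by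
    apply MeasureTheory.integral_nonneg_of_ae
    filter_upwards [hg_nonneg] with t ht
    exact Real.rpow_nonneg ht _
  calc (∫ t in (0:ℝ)..s, f t * (1 + (s - t) ^ (-(1:ℝ)/2)))
      = ∫ a in Set.Ioc (0:ℝ) s, f a * g a := by rw [intervalIntegral.integral_of_le hs.1.le]
    _ ≤ (∫ a in Set.Ioc (0:ℝ) s, f a ^ p) ^ (1/p)
        * (∫ a in Set.Ioc (0:ℝ) s, g a ^ q) ^ (1/q) := hHold
    _ ≤ (∫ a in Set.Ioc (0:ℝ) s, f a ^ p) ^ (1/p)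
        * (∫ u in (0:ℝ)..T, (1 + u ^ (-(1:ℝ)/2)) ^ q) ^ (1/q) := by
        apply mul_le_mul_of_nonneg_left _ (Real.rpow_nonneg hfp_nonneg _)
        exact Real.rpow_le_rpow hgq_nonneg e4 (by positivity)
    _ = (∫ t in (0:ℝ)..s, f t ^ p) ^ (1/p)
        * (∫ u in (0:ℝ)..T, (1 + u ^ (-(1:ℝ)/2)) ^ q) ^ (1/q) := by
        rw [intervalIntegral.integral_of_le hs.1.le]

theorem stmt12 (T C p : ℝ) (hT : 0 < T) (hC : 0 < C) (hp : 2 < p)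
    (w G : ℝ → ℝ) (hwc : ContinuousOn w (Set.Icc 0 T))
    (hwnn : ∀ t ∈ Set.Icc 0 T, 0 ≤ w t)
    (hwbd : ∃ K : ℝ, ∀ t ∈ Set.Icc 0 T, w t ≤ K)
    (hGc : ContinuousOn G (Set.Ici 0)) (hGmono : StrictMonoOn G (Set.Ici 0))
    (hG0 : G 0 = 0) (hGnn : ∀ u : ℝ, 0 ≤ u → 0 ≤ G u)
    (hineq : ∀ s ∈ Set.Ioc 0 T,
      w s ≤ C * ∫ t in (0 : ℝ)..s, G (w t) * (1 + (s - t) ^ (-(1 : ℝ) / 2))) :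
    (∃ Ct > (0 : ℝ), ∀ s ∈ Set.Ioc 0 T, w s ^ p ≤ Ct * ∫ t in (0 : ℝ)..s, G (w t) ^ p) ∧
    ((∀ ε > (0 : ℝ), ¬ IntegrableOn (fun u : ℝ => 1 / G (u ^ (1 / p))) (Set.Ioo 0 ε)) →
      ∀ s ∈ Set.Icc 0 T, w s = 0) := by
  have hp0 : (0:ℝ) < p := by linarith
  set q := p / (p - 1) with hqdef
  have hq1 : 1 < q := by rw [hqdef, lt_div_iff₀ (by linarith)]; linarith
  have hq2 : q < 2 := by rw [hqdef, div_lt_iff₀ (by linarith)]; linarith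
  have hq0 : 0 < q := by linarith
  set w' : ℝ → ℝ := fun t => w (min T (max t 0)) with hw'def
  have hproj : ∀ t : ℝ, min T (max t 0) ∈ Set.Icc (0:ℝ) T := fun t =>
    ⟨le_min hT.le (le_max_right t 0), min_le_left _ _⟩
  have hw'c : Continuous w' := hwc.comp_continuous (by fun_prop) hproj
  have hw'eq : ∀ t ∈ Set.Icc (0:ℝ) T, w' t = w t := by
    intro t ht
    simp only [hw'def]
    rw [max_eq_left ht.1, min_eq_right ht.2]
  have hw'nn : ∀ t, 0 ≤ w' t := fun t => hwnn _ (hproj t)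
  set gW : ℝ → ℝ := fun t => G (w' t) with hgWdef
  have hgWc : Continuous gW := hGc.comp_continuous hw'c (fun t => hw'nn t)
  have hgWnn : ∀ t, 0 ≤ gW t := fun t => hGnn _ (hw'nn t)
  set gWp : ℝ → ℝ := fun t => gW t ^ p with hgWpdef
  have hgWpc : Continuous gWp := by
    rw [continuous_iff_continuousAt]
    exact fun t => (hgWc.continuousAt).rpow_const (Or.inr (by linarith))
  have hgWpnn : ∀ t, 0 ≤ gWp t := fun t => Real.rpow_nonneg (hgWnn t) _
  set M := ∫ u in (0:ℝ)..T, (1 + u ^ (-(1:ℝ)/2)) ^ q with hMdef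
  have hMT : T ≤ M := by
    have h0 : T = ∫ u in (0:ℝ)..T, (1:ℝ) := by simp
    rw [h0, hMdef]
    apply intervalIntegral.integral_mono_on hT.le intervalIntegrable_const
      (aux_kernel_integrable hq0 hq2 hT)
    intro u hu
    rcases eq_or_lt_of_le hu.1 with h | h
    · rw [← h]
      rw [Real.zero_rpow (by norm_num), add_zero, Real.one_rpow]
    · have h1 : (0:ℝ) ≤ u ^ (-(1:ℝ)/2) := Real.rpow_nonneg h.le _
      calc (1:ℝ) = 1 ^ q := (Real.one_rpow q).symm
      _ ≤ (1 + u ^ (-(1:ℝ)/2)) ^ q := Real.rpow_le_rpow zero_le_one (by linarith) hq0.le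
  have hM0 : 0 < M := lt_of_lt_of_le hT hMT
  set Ct := C ^ p * (M ^ (1/q)) ^ p with hCtdef
  have hCt0 : 0 < Ct :=
    mul_pos (Real.rpow_pos_of_pos hC p) (Real.rpow_pos_of_pos (Real.rpow_pos_of_pos hM0 _) _)
  have key1 : ∀ s ∈ Set.Ioc 0 T, w s ^ p ≤ Ct * ∫ t in (0:ℝ)..s, gWp t := by
    intro s hs
    have hA_nonneg : (0:ℝ) ≤ ∫ t in (0:ℝ)..s, gWp t :=
      intervalIntegral.integral_nonneg hs.1.le (fun t _ => hgWpnn t)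
    have h1 : w s ≤ C * ((∫ t in (0:ℝ)..s, gWp t) ^ (1/p) * M ^ (1/q)) := by
      have h3 : (∫ t in (0:ℝ)..s, G (w t) * (1 + (s - t) ^ (-(1:ℝ) / 2)))
          = ∫ t in (0:ℝ)..s, gW t * (1 + (s - t) ^ (-(1:ℝ) / 2)) := by
        apply intervalIntegral.integral_congr
        intro t ht
        rw [Set.uIcc_of_le hs.1.le] at ht
        simp only [hgWdef]
        rw [hw'eq t ⟨ht.1, le_trans ht.2 hs.2⟩]
      have h4 := aux_holder hp hqdef hT hs gW hgWc hgWnn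
      calc w s ≤ C * ∫ t in (0:ℝ)..s, G (w t) * (1 + (s - t) ^ (-(1:ℝ) / 2)) := hineq s hs
        _ = C * ∫ t in (0:ℝ)..s, gW t * (1 + (s - t) ^ (-(1:ℝ) / 2)) := by rw [h3]
        _ ≤ C * ((∫ t in (0:ℝ)..s, gWp t) ^ (1/p) * M ^ (1/q)) := by
            apply mul_le_mul_of_nonneg_left _ hC.le
            simpa only [hgWpdef, hMdef] using h4
    have hw_s_nn : 0 ≤ w s := hwnn s ⟨hs.1.le, hs.2⟩
    have h5 := Real.rpow_le_rpow hw_s_nn h1 hp0.le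
    rw [Real.mul_rpow hC.le (by positivity),
      Real.mul_rpow (by positivity) (by positivity)] at h5
    have h6 : ((∫ t in (0:ℝ)..s, gWp t) ^ ((1:ℝ)/p)) ^ p = ∫ t in (0:ℝ)..s, gWp t := by
      rw [← Real.rpow_mul hA_nonneg, one_div, inv_mul_cancel₀ (ne_of_gt hp0), Real.rpow_one]
    rw [h6] at h5
    calc w s ^ p ≤ C ^ p * ((∫ t in (0:ℝ)..s, gWp t) * (M ^ ((1:ℝ)/q)) ^ p) := h5
      _ = Ct * ∫ t in (0:ℝ)..s, gWp t := by rw [hCtdef]; ring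
  have hgW_eq : ∀ s ∈ Set.Ioc (0:ℝ) T,
      (∫ t in (0:ℝ)..s, gWp t) = ∫ t in (0:ℝ)..s, G (w t) ^ p := by
    intro s hs
    apply intervalIntegral.integral_congr
    intro t ht
    rw [Set.uIcc_of_le hs.1.le] at ht
    simp only [hgWpdef, hgWdef]
    rw [hw'eq t ⟨ht.1, le_trans ht.2 hs.2⟩]
  constructor
  · exact ⟨Ct, hCt0, fun s hs => by rw [← hgW_eq s hs]; exact key1 s hs⟩
  · intro hns
    have hGpos : ∀ z : ℝ, 0 < z → 0 < G z := by
      intro z hz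
      have h := hGmono Set.self_mem_Ici (Set.mem_Ici.2 hz.le) hz
      rwa [hG0] at h
    have hGr_contAt : ∀ u : ℝ, 0 < u → ContinuousAt (fun u : ℝ => G (u ^ ((1:ℝ)/p))) u := by
      intro u hu
      have h1 : ContinuousAt (fun u : ℝ => u ^ ((1:ℝ)/p)) u :=
        Real.continuousAt_rpow_const u _ (Or.inl (ne_of_gt hu))
      have hupos : 0 < u ^ ((1:ℝ)/p) := Real.rpow_pos_of_pos hu _
      have h2 : ContinuousAt G (u ^ ((1:ℝ)/p)) := hGc.continuousAt (Ici_mem_nhds hupos)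
      exact ContinuousAt.comp (g := G) (f := fun u : ℝ => u ^ ((1:ℝ)/p)) h2 h1
    set htrue : ℝ → ℝ := fun u => (G (u ^ ((1:ℝ)/p)) ^ p)⁻¹ with htruedef
    have htrue_contAt : ∀ u : ℝ, 0 < u → ContinuousAt htrue u := by
      intro u hu
      have h4 : ContinuousAt (fun u : ℝ => G (u ^ ((1:ℝ)/p)) ^ p) u :=
        (hGr_contAt u hu).rpow_const (Or.inr hp0.le)
      exact h4.inv₀
        (ne_of_gt (Real.rpow_pos_of_pos (hGpos _ (Real.rpow_pos_of_pos hu _)) _))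
    have htrue_nn : ∀ u : ℝ, 0 ≤ u → 0 ≤ htrue u := fun u hu =>
      inv_nonneg.2 (Real.rpow_nonneg (hGnn _ (Real.rpow_nonneg hu _)) _)
    have key2 : ∀ s0 ∈ Set.Ioc (0:ℝ) T, w s0 = 0 := by
      intro s0 hs0
      by_contra hne
      have hws0 : 0 < w s0 := lt_of_le_of_ne (hwnn s0 ⟨hs0.1.le, hs0.2⟩) (Ne.symm hne)
      set a := w s0 ^ p with hadef
      have ha : 0 < a := Real.rpow_pos_of_pos hws0 p
      have hbound : ∀ δ : ℝ, 0 < δ → δ < a → (∫ u in δ..a, htrue u) ≤ Ct * T := by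
        intro δ hδ0 hδa
        set y : ℝ → ℝ := fun s => δ + Ct * ∫ t in (0:ℝ)..s, gWp t with hydef
        have hyd : ∀ s : ℝ, HasDerivAt y (Ct * gWp s) s := by
          intro s
          have h1 := (hgWpc.integral_hasStrictDerivAt 0 s).hasDerivAt
          have h2 := h1.const_mul Ct
          simpa [hydef] using h2.const_add δ
        have hyge : ∀ s : ℝ, 0 ≤ s → δ ≤ y s := by
          intro s hsnn
          have h1 : 0 ≤ ∫ t in (0:ℝ)..s, gWp t :=
            intervalIntegral.integral_nonneg hsnn (fun t _ => hgWpnn t)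
          simp only [hydef]
          nlinarith [hCt0]
        set hdel : ℝ → ℝ := fun u => (G ((max u δ) ^ ((1:ℝ)/p)) ^ p)⁻¹ with hdeldef
        have hdel_cont : Continuous hdel := by
          rw [continuous_iff_continuousAt]
          intro u
          have hmax : 0 < max u δ := lt_max_of_lt_right hδ0
          have h1 : ContinuousAt (fun u : ℝ => max u δ) u := by fun_prop
          have h2 : ContinuousAt (fun v : ℝ => v ^ ((1:ℝ)/p)) (max u δ) :=
            Real.continuousAt_rpow_const _ _ (Or.inl (ne_of_gt hmax))
          have h3 : ContinuousAt G ((max u δ) ^ ((1:ℝ)/p)) :=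
            hGc.continuousAt (Ici_mem_nhds (Real.rpow_pos_of_pos hmax _))
          have h21 : ContinuousAt (fun u : ℝ => (max u δ) ^ ((1:ℝ)/p)) u :=
            ContinuousAt.comp (g := fun v : ℝ => v ^ ((1:ℝ)/p)) (f := fun u : ℝ => max u δ) h2 h1
          have h4 : ContinuousAt (fun u : ℝ => G ((max u δ) ^ ((1:ℝ)/p))) u :=
            ContinuousAt.comp (g := G) (f := fun u : ℝ => (max u δ) ^ ((1:ℝ)/p)) h3 h21
          exact (h4.rpow_const (Or.inr hp0.le)).inv₀
            (ne_of_gt (Real.rpow_pos_of_pos (hGpos _ (Real.rpow_pos_of_pos hmax _)) _))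
        have hdel_nn : ∀ u : ℝ, 0 ≤ hdel u := fun u =>
          inv_nonneg.2 (Real.rpow_nonneg (hGnn _ (Real.rpow_nonneg
            (le_max_of_le_right hδ0.le) _)) _)
        set Om : ℝ → ℝ := fun x => ∫ u in δ..x, hdel u with hOmdef
        have hOmd : ∀ x : ℝ, HasDerivAt Om (hdel x) x := fun x =>
          (hdel_cont.integral_hasStrictDerivAt δ x).hasDerivAt
        set F : ℝ → ℝ := fun s => Ct * s - Om (y s) with hFdef
        have hFd : ∀ s : ℝ, HasDerivAt F (Ct - hdel (y s) * (Ct * gWp s)) s := by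
          intro s
          have h1 : HasDerivAt (fun s : ℝ => Ct * s) Ct s := by
            simpa using (hasDerivAt_id s).const_mul Ct
          exact h1.sub ((hOmd (y s)).comp s (hyd s))
        have hmono : MonotoneOn F (Set.Icc 0 s0) := by
          apply monotoneOn_of_deriv_nonneg (convex_Icc 0 s0)
          · exact Continuous.continuousOn (by
              rw [continuous_iff_continuousAt]; exact fun x => (hFd x).continuousAt)
          · intro x hx
            exact (hFd x).differentiableAt.differentiableWithinAt
          · intro x hx
            rw [interior_Icc] at hx
            rw [(hFd x).deriv]
            have hxIoc : x ∈ Set.Ioc (0:ℝ) T := ⟨hx.1, le_trans hx.2.le hs0.2⟩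
            have hxIcc : x ∈ Set.Icc (0:ℝ) T := ⟨hxIoc.1.le, hxIoc.2⟩
            have hwx := key1 x hxIoc
            have hyx : w x ^ p ≤ y x := by
              simp only [hydef]; linarith
            have hyxpos : 0 < y x := lt_of_lt_of_le hδ0 (hyge x hx.1.le)
            have hwx2 : w x ≤ (y x) ^ ((1:ℝ)/p) := by
              have h7 := Real.rpow_le_rpow (Real.rpow_nonneg (hwnn x hxIcc) p) hyx
                (by positivity : (0:ℝ) ≤ 1/p)
              rwa [← Real.rpow_mul (hwnn x hxIcc), mul_one_div_cancel (ne_of_gt hp0),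
                Real.rpow_one] at h7
            have hgwpx : gWp x = G (w x) ^ p := by
              simp only [hgWpdef, hgWdef]
              rw [hw'eq x hxIcc]
            have hGle : G (w x) ≤ G ((y x) ^ ((1:ℝ)/p)) :=
              hGmono.monotoneOn (Set.mem_Ici.2 (hwnn x hxIcc))
                (Set.mem_Ici.2 (Real.rpow_nonneg hyxpos.le _)) hwx2
            have hgle2 : gWp x ≤ G ((y x) ^ ((1:ℝ)/p)) ^ p := by
              rw [hgwpx]
              exact Real.rpow_le_rpow (hGnn _ (hwnn x hxIcc)) hGle hp0.le
            have hdelyx : hdel (y x) = (G ((y x) ^ ((1:ℝ)/p)) ^ p)⁻¹ := by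
              simp only [hdeldef]
              rw [max_eq_left (hyge x hx.1.le)]
            have hP : 0 < G ((y x) ^ ((1:ℝ)/p)) ^ p :=
              Real.rpow_pos_of_pos (hGpos _ (Real.rpow_pos_of_pos hyxpos _)) _
            have hkey : hdel (y x) * (Ct * gWp x) ≤ Ct := by
              rw [hdelyx]
              have h8 : Ct * gWp x ≤ Ct * (G ((y x) ^ ((1:ℝ)/p)) ^ p) :=
                mul_le_mul_of_nonneg_left hgle2 hCt0.le
              have h9 := mul_le_mul_of_nonneg_left h8 (inv_nonneg.2 hP.le)
              have h10 : (G ((y x) ^ ((1:ℝ)/p)) ^ p)⁻¹ * (Ct * (G ((y x) ^ ((1:ℝ)/p)) ^ p))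
                  = Ct := by field_simp
              linarith
            linarith
        have hF0 : F 0 ≤ F s0 := hmono (Set.left_mem_Icc.2 hs0.1.le)
          (Set.right_mem_Icc.2 hs0.1.le) hs0.1.le
        have hOmys0 : Om (y s0) ≤ Ct * s0 := by
          have hy0 : y 0 = δ := by simp [hydef]
          have hOmδ : Om δ = 0 := by simp [hOmdef]
          simp only [hFdef] at hF0
          rw [hy0, hOmδ] at hF0
          linarith
        have hays0 : a ≤ y s0 := by
          have := key1 s0 hs0
          simp only [hydef]
          linarith
        have hc1 : (∫ u in δ..a, htrue u) = ∫ u in δ..a, hdel u := by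
          apply intervalIntegral.integral_congr
          intro u hu
          rw [Set.uIcc_of_le hδa.le] at hu
          simp only [htruedef, hdeldef]
          rw [max_eq_left hu.1]
        have hc2 : (∫ u in δ..a, hdel u) ≤ ∫ u in δ..(y s0), hdel u := by
          apply intervalIntegral.integral_mono_interval le_rfl hδa.le hays0
          · apply (ae_restrict_iff' measurableSet_Ioc).2
            exact Eventually.of_forall fun u _ => hdel_nn u
          · exact hdel_cont.intervalIntegrable _ _
        have hc3 : (∫ u in δ..(y s0), hdel u) = Om (y s0) := rfl
        have hc4 : Ct * s0 ≤ Ct * T := mul_le_mul_of_nonneg_left hs0.2 hCt0.le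
        rw [hc1]
        linarith
      have h_int : IntegrableOn htrue (Set.Ioc 0 a) := by
        have hδn : ∀ n : ℕ, 0 < a / ((n:ℝ) + 2) := fun n => by positivity
        have hδna : ∀ n : ℕ, a / ((n:ℝ) + 2) < a := fun n =>
          div_lt_self ha (by norm_num; linarith [Nat.cast_nonneg (α := ℝ) n])
        apply MeasureTheory.integrableOn_Ioc_of_intervalIntegral_norm_bounded_left
          (I := Ct * T) (a := fun n : ℕ => a / ((n:ℝ) + 2)) (l := atTop)
        · intro n
          apply (ContinuousOn.integrableOn_Icc ?_).mono_set Set.Ioc_subset_Icc_self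
          intro u hu
          exact (htrue_contAt u (lt_of_lt_of_le (hδn n) hu.1)).continuousWithinAt
        · exact Tendsto.div_atTop tendsto_const_nhds
            (tendsto_atTop_add_const_right atTop 2 tendsto_natCast_atTop_atTop)
        · apply Eventually.of_forall
          intro n
          have hle : a / ((n:ℝ) + 2) ≤ a := (hδna n).le
          have he : (∫ x in Set.Ioc (a / ((n:ℝ) + 2)) a, ‖htrue x‖)
              = ∫ x in (a / ((n:ℝ) + 2))..a, ‖htrue x‖ :=
            (intervalIntegral.integral_of_le hle).symm
          rw [he]
          have he2 : (∫ x in (a / ((n:ℝ) + 2))..a, ‖htrue x‖)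
              = ∫ x in (a / ((n:ℝ) + 2))..a, htrue x := by
            apply intervalIntegral.integral_congr
            intro u hu
            rw [Set.uIcc_of_le hle] at hu
            exact Real.norm_of_nonneg (htrue_nn u (le_trans (hδn n).le hu.1))
          rw [he2]
          exact hbound _ (hδn n) (hδna n)
      have hGW0 : Tendsto (fun u : ℝ => G (u ^ ((1:ℝ)/p)))
          (nhdsWithin 0 (Set.Ici 0)) (𝓝 0) := by
        have c1 : ContinuousWithinAt (fun u : ℝ => u ^ ((1:ℝ)/p)) (Set.Ici 0) 0 :=
          (Real.continuousAt_rpow_const 0 _ (Or.inr (by positivity))).continuousWithinAt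
        have c2 : ContinuousWithinAt G (Set.Ici 0) (0 ^ ((1:ℝ)/p)) := by
          rw [Real.zero_rpow (by positivity : (1:ℝ)/p ≠ 0)]
          exact hGc.continuousWithinAt Set.self_mem_Ici
        have c3 := ContinuousWithinAt.comp (g := G) (f := fun u : ℝ => u ^ ((1:ℝ)/p))
          (s := Set.Ici 0) (t := Set.Ici 0) c2 c1 (fun u hu => Real.rpow_nonneg hu _)
        have h0 : G ((0:ℝ) ^ ((1:ℝ)/p)) = 0 := by
          rw [Real.zero_rpow (by positivity : (1:ℝ)/p ≠ 0), hG0]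
        have c4 : Tendsto (fun u : ℝ => G (u ^ ((1:ℝ)/p))) (nhdsWithin 0 (Set.Ici 0))
            (𝓝 (G ((0:ℝ) ^ ((1:ℝ)/p)))) := c3
        rwa [h0] at c4
      have hev : ∀ᶠ u in nhdsWithin 0 (Set.Ici 0), G (u ^ ((1:ℝ)/p)) < 1 :=
        hGW0.eventually_lt_const one_pos
      rw [eventually_nhdsWithin_iff] at hev
      rw [Metric.eventually_nhds_iff] at hev
      obtain ⟨ε, hε, hball⟩ := hev
      set ε' := min (ε/2) a with hε'def
      have hε'0 : 0 < ε' := lt_min (half_pos hε) ha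
      apply hns ε' hε'0
      have hsub : Set.Ioo (0:ℝ) ε' ⊆ Set.Ioc 0 a := fun u hu =>
        ⟨hu.1, le_trans hu.2.le (min_le_right _ _)⟩
      apply Integrable.mono' (h_int.mono_set hsub)
      · apply ContinuousOn.aestronglyMeasurable _ measurableSet_Ioo
        intro u hu
        have hGp : 0 < G (u ^ ((1:ℝ)/p)) := hGpos _ (Real.rpow_pos_of_pos hu.1 _)
        exact (ContinuousAt.div continuousAt_const (hGr_contAt u hu.1)
          (ne_of_gt hGp)).continuousWithinAt
      · apply (ae_restrict_iff' measurableSet_Ioo).2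
        apply Eventually.of_forall
        intro u hu
        have hu0 : 0 < u := hu.1
        have hG1 : G (u ^ ((1:ℝ)/p)) < 1 := by
          apply hball _ (Set.mem_Ici.2 hu0.le)
          rw [Real.dist_eq, sub_zero, abs_of_pos hu0]
          calc u < ε' := hu.2
            _ ≤ ε / 2 := min_le_left _ _
            _ < ε := by linarith
        have hGp : 0 < G (u ^ ((1:ℝ)/p)) := hGpos _ (Real.rpow_pos_of_pos hu0 _)
        have hGpP : G (u ^ ((1:ℝ)/p)) ^ p ≤ G (u ^ ((1:ℝ)/p)) := by
          have h1 := Real.rpow_le_rpow_of_exponent_ge hGp hG1.le (by linarith : (1:ℝ) ≤ p)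
          rwa [Real.rpow_one] at h1
        have hGpP0 : 0 < G (u ^ ((1:ℝ)/p)) ^ p := Real.rpow_pos_of_pos hGp _
        rw [Real.norm_of_nonneg (by positivity : (0:ℝ) ≤ 1 / G (u ^ ((1:ℝ)/p)))]
        rw [one_div]
        simp only [htruedef]
        exact inv_anti₀ hGpP0 hGpP
    intro s hsIcc
    rcases eq_or_lt_of_le hsIcc.1 with h0 | h0
    · haveI : (nhdsWithin (0:ℝ) (Set.Ioc 0 T)).NeBot := by
        apply mem_closure_iff_nhdsWithin_neBot.1
        rw [closure_Ioc hT.ne]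
        exact ⟨le_refl 0, hT.le⟩
      have h1 : Tendsto w (nhdsWithin 0 (Set.Ioc 0 T)) (𝓝 (w 0)) :=
        (hwc 0 ⟨le_refl 0, hT.le⟩).mono Set.Ioc_subset_Icc_self
      have h2 : Tendsto w (nhdsWithin 0 (Set.Ioc 0 T)) (𝓝 0) := by
        apply Tendsto.congr' _ tendsto_const_nhds
        filter_upwards [self_mem_nhdsWithin] with t ht
        exact (key2 t ht).symm
      rw [← h0]
      exact tendsto_nhds_unique h1 h2
    · exact key2 s ⟨h0, hsIcc.2⟩
end

section
/- Define F(g) = (1/√π) e^{−1/(4g²)} + (1/g)Φ(1/(2g)) − 1/(2g) − g for g > 0, where Φ(x) = π^{−1/2} ∫_{−∞}^x e^{−y²} dy. Then F'(g) ≤ −1 for all g > 0; consequently F is strictly decreasing on (0,∞), tends to +∞ as g → 0+ and to −∞ as g → ∞, and has a unique zero g₀ ∈ (0,1). -/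
open Real MeasureTheory Set Filter intervalIntegral Topology

lemma gauss_int : Integrable (fun y : ℝ => Real.exp (-y ^ 2)) := by
  simpa using integrable_exp_neg_mul_sq (by norm_num : (0:ℝ) < 1)

lemma gauss_cont : Continuous (fun y : ℝ => Real.exp (-y ^ 2)) := by
  continuity

lemma Iic_eq (x : ℝ) : (∫ y in Iic x, Real.exp (-y ^ 2))
    = (∫ y in Iic (0:ℝ), Real.exp (-y ^ 2)) + ∫ y in (0:ℝ)..x, Real.exp (-y ^ 2) := by
  rw [← integral_Iic_sub_Iic gauss_int.integrableOn gauss_int.integrableOn]; ring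

lemma Iic_zero : (∫ y in Iic (0:ℝ), Real.exp (-y ^ 2)) = Real.sqrt Real.pi / 2 := by
  have htot : (∫ y : ℝ, Real.exp (-y ^ 2)) = Real.sqrt Real.pi := by
    simpa using integral_gaussian 1
  have hsym : (∫ y in Iic (0:ℝ), Real.exp (-y ^ 2)) = ∫ y in Ioi (0:ℝ), Real.exp (-y ^ 2) := by
    have := integral_comp_neg_Iic (0:ℝ) (fun y => Real.exp (-y ^ 2))
    simpa using this
  have hsplit := integral_Iic_add_Ioi (b := (0:ℝ)) gauss_int.integrableOn gauss_int.integrableOn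
  rw [htot] at hsplit
  linarith [hsym, hsplit]

/-- `Φ(x) = π^{-1/2} ∫_{-∞}^x e^{-y²} dy`. -/
noncomputable def PhiErf (x : ℝ) : ℝ :=
  (Real.sqrt Real.pi)⁻¹ * ∫ y in Set.Iic x, Real.exp (-y ^ 2)

lemma hasDerivAt_I (x : ℝ) :
    HasDerivAt (fun x => ∫ y in Iic x, Real.exp (-y ^ 2)) (Real.exp (-x ^ 2)) x := by
  have h : HasDerivAt
      (fun u => (∫ y in Iic (0:ℝ), Real.exp (-y ^ 2)) + ∫ y in (0:ℝ)..u, Real.exp (-y ^ 2))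
      (Real.exp (-x ^ 2)) x := by
    refine HasDerivAt.const_add _ ?_
    exact intervalIntegral.integral_hasDerivAt_right (gauss_int.intervalIntegrable)
      (gauss_cont.stronglyMeasurable.stronglyMeasurableAtFilter) gauss_cont.continuousAt
  simpa only [← Iic_eq] using h

lemma hasDerivAt_Phi (x : ℝ) :
    HasDerivAt PhiErf ((Real.sqrt Real.pi)⁻¹ * Real.exp (-x ^ 2)) x := by
  unfold PhiErf
  exact (hasDerivAt_I x).const_mul _

lemma sqrt_pi_pos : 0 < Real.sqrt Real.pi := Real.sqrt_pos.2 Real.pi_pos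

lemma Phi_mono : Monotone PhiErf := by
  intro a b hab
  unfold PhiErf
  have h : (0:ℝ) ≤ ∫ y in a..b, Real.exp (-y ^ 2) :=
    intervalIntegral.integral_nonneg hab fun y _ => (Real.exp_pos _).le
  rw [← integral_Iic_sub_Iic gauss_int.integrableOn gauss_int.integrableOn] at h
  have hp := inv_pos.2 sqrt_pi_pos
  nlinarith

lemma Phi_eq (x : ℝ) :
    PhiErf x = 1/2 + (Real.sqrt Real.pi)⁻¹ * ∫ y in (0:ℝ)..x, Real.exp (-y ^ 2) := by
  unfold PhiErf
  rw [Iic_eq, Iic_zero, mul_add]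
  field_simp

lemma Phi_ge_half {x : ℝ} (hx : 0 ≤ x) : 1/2 ≤ PhiErf x := by
  rw [Phi_eq]
  have h : (0:ℝ) ≤ ∫ y in (0:ℝ)..x, Real.exp (-y ^ 2) :=
    intervalIntegral.integral_nonneg hx fun y _ => (Real.exp_pos _).le
  nlinarith [sqrt_pi_pos, inv_pos.2 sqrt_pi_pos]

lemma Phi_nonneg (x : ℝ) : 0 ≤ PhiErf x := by
  unfold PhiErf
  have h : (0:ℝ) ≤ ∫ y in Iic x, Real.exp (-y ^ 2) :=
    setIntegral_nonneg measurableSet_Iic fun y _ => (Real.exp_pos _).le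
  positivity

lemma Phi_le_one (x : ℝ) : PhiErf x ≤ 1 := by
  unfold PhiErf
  have h : (∫ y in Iic x, Real.exp (-y ^ 2)) ≤ ∫ y : ℝ, Real.exp (-y ^ 2) :=
    setIntegral_le_integral gauss_int (Eventually.of_forall fun y => (Real.exp_pos _).le)
  have htot : (∫ y : ℝ, Real.exp (-y ^ 2)) = Real.sqrt Real.pi := by
    simpa using integral_gaussian 1
  rw [htot] at h
  rw [inv_mul_le_iff₀ sqrt_pi_pos, mul_one]
  exact h

lemma Phi_upper {x : ℝ} (hx : 0 ≤ x) : PhiErf x ≤ 1/2 + (Real.sqrt Real.pi)⁻¹ * x := by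
  rw [Phi_eq]
  have h : (∫ y in (0:ℝ)..x, Real.exp (-y ^ 2)) ≤ ∫ _ in (0:ℝ)..x, (1:ℝ) := by
    refine intervalIntegral.integral_mono_on hx (gauss_int.intervalIntegrable)
      (intervalIntegrable_const) fun y _ => ?_
    calc Real.exp (-y ^ 2) ≤ Real.exp 0 := Real.exp_le_exp.2 (by nlinarith)
    _ = 1 := Real.exp_zero
  simp only [intervalIntegral.integral_const, smul_eq_mul, mul_one, sub_zero] at h
  nlinarith [inv_pos.2 sqrt_pi_pos]

lemma Phi_one_lower : 1/2 + (Real.sqrt Real.pi)⁻¹ * Real.exp (-1) ≤ PhiErf 1 := by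
  rw [Phi_eq]
  have h : (∫ _ in (0:ℝ)..1, Real.exp (-1)) ≤ ∫ y in (0:ℝ)..1, Real.exp (-y ^ 2) := by
    refine intervalIntegral.integral_mono_on zero_le_one intervalIntegrable_const
      (gauss_int.intervalIntegrable) fun y hy => ?_
    refine Real.exp_le_exp.2 ?_
    rcases hy with ⟨h0, h1⟩
    nlinarith
  simp only [intervalIntegral.integral_const, smul_eq_mul, sub_zero, one_mul] at h
  nlinarith [inv_pos.2 sqrt_pi_pos]

/-- `F(g) = (1/√π) e^{-1/(4g²)} + (1/g)Φ(1/(2g)) − 1/(2g) − g`. -/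
noncomputable def Fcal (g : ℝ) : ℝ :=
  (Real.sqrt Real.pi)⁻¹ * Real.exp (-(1 / (4 * g ^ 2)))
    + (1 / g) * PhiErf (1 / (2 * g)) - 1 / (2 * g) - g

lemma hasDerivAt_F {g : ℝ} (hg : 0 < g) :
    HasDerivAt Fcal ((1/2 - PhiErf (1/(2*g)))/g^2 - 1) g := by
  have hg0 : g ≠ 0 := ne_of_gt hg
  -- derivative of 1/(4 g²)
  have h4 : HasDerivAt (fun g : ℝ => 4 * g ^ 2) (8 * g) g := by
    have := (hasDerivAt_pow 2 g).const_mul (4:ℝ)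
    refine this.congr_deriv ?_; norm_num; ring
  have hq : HasDerivAt (fun g : ℝ => 1/(4 * g ^ 2)) (-(8*g)/(4*g^2)^2) g := by
    simpa only [one_div, Pi.inv_def] using h4.inv (by positivity)
  -- derivative of 1/(2 g)
  have h2 : HasDerivAt (fun g : ℝ => 2 * g) 2 g := by
    simpa using (hasDerivAt_id g).const_mul (2:ℝ)
  have hu : HasDerivAt (fun g : ℝ => 1/(2 * g)) (-2/(2*g)^2) g := by
    simpa only [one_div, Pi.inv_def] using h2.inv (by positivity)
  -- derivative of exp term
  have hA : HasDerivAt (fun g : ℝ => Real.exp (-(1 / (4 * g ^ 2))))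
      (Real.exp (-(1 / (4 * g ^ 2))) * (-(-(8*g)/(4*g^2)^2))) g := hq.neg.exp
  -- derivative of 1/g
  have hinv : HasDerivAt (fun g : ℝ => 1/g) (-(g^2)⁻¹) g := by
    simpa only [one_div] using hasDerivAt_inv hg0
  -- derivative of PhiErf (1/(2g))
  have hP : HasDerivAt (fun g : ℝ => PhiErf (1/(2 * g)))
      ((Real.sqrt Real.pi)⁻¹ * Real.exp (-(1/(2*g)) ^ 2) * (-2/(2*g)^2)) g :=
    HasDerivAt.comp (h₂ := PhiErf) g (hasDerivAt_Phi (1/(2*g))) hu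
  have hF := (((hA.const_mul ((Real.sqrt Real.pi)⁻¹)).add (hinv.mul hP)).sub hu).sub
    (hasDerivAt_id g)
  have hsq : (-(1/(2*g)) ^ 2 : ℝ) = -(1 / (4 * g ^ 2)) := by
    field_simp; ring
  rw [hsq] at hF
  refine hF.congr_deriv ?_
  have hE := Real.exp_pos (-(1 / (4 * g ^ 2)))
  field_simp
  ring

lemma deriv_F_le {g : ℝ} (hg : 0 < g) : deriv Fcal g ≤ -1 := by
  rw [(hasDerivAt_F hg).deriv]
  have h1 : (1:ℝ)/2 ≤ PhiErf (1/(2*g)) := Phi_ge_half (by positivity)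
  have h2 : (0:ℝ) < g ^ 2 := by positivity
  have : (1/2 - PhiErf (1/(2*g)))/g^2 ≤ 0 := div_nonpos_of_nonpos_of_nonneg (by linarith) h2.le
  linarith

lemma F_anti : StrictAntiOn Fcal (Set.Ioi 0) := by
  refine strictAntiOn_of_deriv_neg (convex_Ioi 0) ?_ ?_
  · exact fun x hx => ((hasDerivAt_F hx).continuousAt).continuousWithinAt
  · intro x hx
    rw [interior_Ioi] at hx
    have := deriv_F_le hx
    linarith

lemma F_top : Tendsto Fcal (𝓝[>] (0:ℝ)) atTop := by
  set c : ℝ := (Real.sqrt Real.pi)⁻¹ * Real.exp (-1) with hc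
  have hcpos : 0 < c := by positivity
  have hbound : ∀ g ∈ Ioo (0:ℝ) (1/2), c/g - 1 ≤ Fcal g := by
    rintro g ⟨hg, hg2⟩
    have hgne : g ≠ 0 := ne_of_gt hg
    have hu1 : (1:ℝ) ≤ 1/(2*g) := by
      rw [le_div_iff₀ (by positivity)]; linarith
    have hPhi : 1/2 + c ≤ PhiErf (1/(2*g)) := le_trans Phi_one_lower (Phi_mono hu1)
    have hmul : (1/g) * (1/2 + c) ≤ (1/g) * PhiErf (1/(2*g)) :=
      mul_le_mul_of_nonneg_left hPhi (by positivity)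
    have heq : (1/g) * (1/2 + c) = 1/(2*g) + c/g := by field_simp
    have hT1 : (0:ℝ) ≤ (Real.sqrt Real.pi)⁻¹ * Real.exp (-(1 / (4 * g ^ 2))) := by positivity
    unfold Fcal
    rw [heq] at hmul
    linarith
  have hmem : Ioo (0:ℝ) (1/2) ∈ 𝓝[>] (0:ℝ) := Ioo_mem_nhdsGT (by norm_num)
  have hev : (fun g => c/g - 1) ≤ᶠ[𝓝[>] (0:ℝ)] Fcal := by
    filter_upwards [hmem] with g hg using hbound g hg
  refine tendsto_atTop_mono' _ hev ?_
  · have h1 : Tendsto (fun g : ℝ => c/g) (𝓝[>] (0:ℝ)) atTop := by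
      simp only [div_eq_mul_inv]
      exact tendsto_inv_nhdsGT_zero.const_mul_atTop hcpos
    simpa [sub_eq_add_neg] using tendsto_atTop_add_const_right _ (-1 : ℝ) h1

lemma F_bot : Tendsto Fcal atTop atBot := by
  have hbound : ∀ g : ℝ, 1 ≤ g → Fcal g ≤ 2 - g := by
    intro g hg
    have hgpos : (0:ℝ) < g := lt_of_lt_of_le one_pos hg
    have hT1 : (Real.sqrt Real.pi)⁻¹ * Real.exp (-(1 / (4 * g ^ 2))) ≤ 1 := by
      have he : Real.exp (-(1 / (4 * g ^ 2))) ≤ 1 := Real.exp_le_one_iff.2 (neg_nonpos.2 (by positivity))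
      have hs : (Real.sqrt Real.pi)⁻¹ ≤ 1 := by
        rw [inv_le_one_iff₀]
        right
        rw [Real.le_sqrt' one_pos]
        nlinarith [Real.pi_gt_three]
      nlinarith [Real.exp_pos (-(1 / (4 * g ^ 2))), inv_pos.2 sqrt_pi_pos]
    have hT2 : (1/g) * PhiErf (1/(2*g)) ≤ 1 := by
      have h1 : (1/g) * PhiErf (1/(2*g)) ≤ (1/g) * 1 :=
        mul_le_mul_of_nonneg_left (Phi_le_one _) (by positivity)
      have h2 : (1:ℝ)/g ≤ 1 := by rw [div_le_one hgpos]; exact hg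
      linarith
    have hT3 : (0:ℝ) ≤ 1/(2*g) := by positivity
    unfold Fcal
    linarith
  have hev : Fcal ≤ᶠ[atTop] (fun g : ℝ => 2 - g) := by
    filter_upwards [eventually_ge_atTop (1:ℝ)] with g hg using hbound g hg
  refine tendsto_atBot_mono' _ hev ?_
  · have := tendsto_atBot_add_const_left atTop (2:ℝ) (tendsto_neg_atTop_atBot (G := ℝ))
    simpa [sub_eq_add_neg] using this

lemma F_one_neg : Fcal 1 < 0 := by
  have hs : (3:ℝ)/2 < Real.sqrt Real.pi := by
    rw [Real.lt_sqrt (by norm_num)]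
    nlinarith [Real.pi_gt_three]
  have hsi : (Real.sqrt Real.pi)⁻¹ < 2/3 := by
    rw [inv_lt_iff_one_lt_mul₀ sqrt_pi_pos]
    nlinarith
  have hPhi : PhiErf (1/2) ≤ 1/2 + (Real.sqrt Real.pi)⁻¹ * (1/2) := Phi_upper (by norm_num)
  have he : Real.exp (-(1 / (4 * (1:ℝ) ^ 2))) ≤ 1 :=
    Real.exp_le_one_iff.2 (by norm_num)
  have hT1 : (Real.sqrt Real.pi)⁻¹ * Real.exp (-(1 / (4 * (1:ℝ) ^ 2))) ≤ (Real.sqrt Real.pi)⁻¹ := by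
    nlinarith [inv_pos.2 sqrt_pi_pos, Real.exp_pos (-(1 / (4 * (1:ℝ) ^ 2)))]
  unfold Fcal
  norm_num at hPhi hT1 ⊢
  nlinarith [inv_pos.2 sqrt_pi_pos]

theorem stmt15 :
    (∀ g : ℝ, 0 < g → deriv Fcal g ≤ -1) ∧
    StrictAntiOn Fcal (Set.Ioi 0) ∧
    Filter.Tendsto Fcal (nhdsWithin 0 (Set.Ioi 0)) Filter.atTop ∧
    Filter.Tendsto Fcal Filter.atTop Filter.atBot ∧
    (∃! g₀ : ℝ, 0 < g₀ ∧ Fcal g₀ = 0) ∧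
    (∀ g₀ : ℝ, 0 < g₀ → Fcal g₀ = 0 → g₀ < 1) := by
  have hlt1 : ∀ g₀ : ℝ, 0 < g₀ → Fcal g₀ = 0 → g₀ < 1 := by
    intro g₀ hg₀ hF
    by_contra h
    push_neg at h
    rcases eq_or_lt_of_le h with h' | h'
    · rw [← h'] at hF
      exact absurd hF (ne_of_lt F_one_neg)
    · have := F_anti (mem_Ioi.2 one_pos) (mem_Ioi.2 hg₀) h'
      rw [hF] at this
      linarith [F_one_neg]
  refine ⟨fun g hg => deriv_F_le hg, F_anti, F_top, F_bot, ?_, hlt1⟩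
  -- existence of zero
  obtain ⟨a, ha1, ha0⟩ : ∃ a : ℝ, 1 ≤ Fcal a ∧ a ∈ Ioi (0:ℝ) :=
    ((F_top.eventually (eventually_ge_atTop 1)).and self_mem_nhdsWithin).exists
  obtain ⟨b, hb1, hab⟩ : ∃ b : ℝ, Fcal b ≤ -1 ∧ a ≤ b :=
    ((F_bot.eventually (eventually_le_atBot (-1))).and (eventually_ge_atTop a)).exists
  have hapos : (0:ℝ) < a := ha0
  have hcont : ContinuousOn Fcal (Icc a b) := fun x hx =>
    ((hasDerivAt_F (lt_of_lt_of_le hapos hx.1)).continuousAt).continuousWithinAt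
  have h0 : (0:ℝ) ∈ Icc (Fcal b) (Fcal a) := ⟨by linarith, by linarith⟩
  obtain ⟨g₀, hg₀mem, hg₀⟩ := intermediate_value_Icc' hab hcont h0
  have hg₀pos : 0 < g₀ := lt_of_lt_of_le hapos hg₀mem.1
  refine ⟨g₀, ⟨hg₀pos, hg₀⟩, ?_⟩
  rintro y ⟨hy, hFy⟩
  exact F_anti.injOn (mem_Ioi.2 hy) (mem_Ioi.2 hg₀pos) (by rw [hFy, hg₀])
end
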